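/- Let W be the first Weyl algebra over a field k of characteristic zero and let ∂_q denote the derivation on M_N(W) given by ∂_q(a) = [a, p]. If {a_n}_{n≥0} is a sequence in M_N(W) with ∂_q(a_n) = n·a_{n-1} (and ∂_q(a_0) = 0) such that a_n ∈ M_N(W)·q for all sufficiently large n, then there exist finitely many matrices A_0, ..., A_m ∈ M_N(k[p]) such that a_n = Σ_{s=0}^{m} C(n,s)·A_s·q^{n-s} for all n ≥ 0. -/

import Mathlib

open Polynomial

set_option synthInstance.maxHeartbeats 1000000
set_option maxHeartbeats 1000000

noncomputable section

variable (k : Type*) [Field k] [CharZero k]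

/-- The operator `p`: multiplication by `X` on `k[X]`. -/
def pOp : Module.End k (Polynomial k) := LinearMap.mulLeft k (X : Polynomial k)

/-- The operator `q = d/dX` on `k[X]`. -/
def qOp : Module.End k (Polynomial k) := derivative

/-- The (first) Weyl algebra, realized concretely as the subalgebra of
`End_k(k[X])` generated by multiplication by `X` and `d/dX`.  (In characteristic
zero this is a faithful model of `k⟨p,q | qp - pq = 1⟩`.) -/
def WeylA : Subalgebra k (Module.End k (Polynomial k)) :=
  Algebra.adjoin k {pOp k, qOp k}

/-- The element `p` of the Weyl algebra. -/
def pW : WeylA k := ⟨pOp k, Algebra.subset_adjoin (Set.mem_insert _ _)⟩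

/-- The element `q` of the Weyl algebra. -/
def qW : WeylA k := ⟨qOp k, Algebra.subset_adjoin (Set.mem_insert_of_mem _ rfl)⟩

variable (N : ℕ)

/-- `M_N(W)`, the `N×N` matrices over the Weyl algebra. -/
abbrev MW := Matrix (Fin N) (Fin N) (WeylA k)

/-- The scalar matrix `p·Id_N`. -/
def pM : MW k N := Matrix.diagonal fun _ => pW k

/-- The scalar matrix `q·Id_N`. -/
def qM : MW k N := Matrix.diagonal fun _ => qW k

/-- The derivation `∂_q(a) = [a,p]` on `M_N(W)`. -/
def dq (a : MW k N) : MW k N := a * pM k N - pM k N * a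

/-- Evaluation of a polynomial at `p`, i.e. the embedding `k[p] → W`. -/
def polyP : Polynomial k →ₐ[k] WeylA k := Polynomial.aeval (pW k)

/-- Evaluation of a polynomial at `q`, i.e. the embedding `k[q] → W`. -/
def polyQ : Polynomial k →ₐ[k] WeylA k := Polynomial.aeval (qW k)

set_option linter.unusedSectionVars false

lemma aeval_pOp_eq (f : Polynomial k) :
    Polynomial.aeval (pOp k) f = LinearMap.mulLeft k f := by
  have h : pOp k = Algebra.lmul k (Polynomial k) X := rfl
  rw [h, Polynomial.aeval_algHom_apply (Algebra.lmul k (Polynomial k)) X f,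
    Polynomial.aeval_X_left_apply]
  rfl

lemma qp_rel : qW k * pW k - pW k * qW k = 1 := by
  apply Subtype.ext
  push_cast
  show (qOp k * pOp k - pOp k * qOp k : Module.End k (Polynomial k)) = 1
  apply LinearMap.ext; intro f
  simp [qOp, pOp, Module.End.mul_apply, derivative_mul]

lemma commute_aeval {A : Type*} [Ring A] [Algebra k A] {x y : A}
    (h : Commute x y) (g : Polynomial k) : Commute (Polynomial.aeval x g) y := by
  induction g using Polynomial.induction_on' with
  | add p q hp hq => rw [map_add]; exact hp.add_left hq
  | monomial n a =>
    rw [Polynomial.aeval_monomial]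
    exact (Algebra.commute_algebraMap_left a y).mul_left (h.pow_left n)

lemma exists_polyP_of_commute (w : WeylA k) (h : w * pW k = pW k * w) :
    ∃ f : Polynomial k, w = polyP k f := by
  have hval : (pOp k) * (w : Module.End k (Polynomial k)) = (w : Module.End k (Polynomial k)) * pOp k := by
    have := congrArg Subtype.val h.symm
    exact this
  have hc : Commute (pOp k) (w : Module.End k (Polynomial k)) := hval
  refine ⟨(w : Module.End k (Polynomial k)) 1, Subtype.ext ?_⟩
  have hcoe : ((polyP k ((w : Module.End k (Polynomial k)) 1) : WeylA k) : Module.End k (Polynomial k))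
      = Polynomial.aeval (pOp k) ((w : Module.End k (Polynomial k)) 1) :=
    (Polynomial.aeval_algHom_apply (WeylA k).val (pW k) _).symm
  rw [hcoe, aeval_pOp_eq]
  apply LinearMap.ext; intro g
  have h2 : Commute (Polynomial.aeval (pOp k) g) (w : Module.End k (Polynomial k)) :=
    commute_aeval k hc g
  have h3 := congrFun (congrArg DFunLike.coe h2.eq) (1 : Polynomial k)
  simp only [Module.End.mul_apply] at h3
  calc (w : Module.End k (Polynomial k)) g
      = (w : Module.End k (Polynomial k)) ((Polynomial.aeval (pOp k) g) 1) := by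
        rw [aeval_pOp_eq]; simp [LinearMap.mulLeft_apply]
    _ = (Polynomial.aeval (pOp k) g) ((w : Module.End k (Polynomial k)) 1) := h3.symm
    _ = LinearMap.mulLeft k ((w : Module.End k (Polynomial k)) 1) g := by
        rw [aeval_pOp_eq]; simp [LinearMap.mulLeft_apply, mul_comm]

lemma polyP_eq_zero_of_mul_q (f : Polynomial k) (y : WeylA k)
    (h : polyP k f = y * qW k) : f = 0 := by
  have hval : ((polyP k f : WeylA k) : Module.End k (Polynomial k))
      = (y : Module.End k (Polynomial k)) * qOp k := by
    have := congrArg Subtype.val h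
    exact this
  have hcoe : ((polyP k f : WeylA k) : Module.End k (Polynomial k))
      = Polynomial.aeval (pOp k) f :=
    (Polynomial.aeval_algHom_apply (WeylA k).val (pW k) _).symm
  have h1 := congrFun (congrArg DFunLike.coe (hcoe.symm.trans hval)) (1 : Polynomial k)
  rw [aeval_pOp_eq] at h1
  simpa [LinearMap.mulLeft_apply, Module.End.mul_apply, qOp] using h1

lemma polyP_mul_pW (f : Polynomial k) : polyP k f * pW k = pW k * polyP k f := by
  have h1 : pW k = polyP k X := by simp [polyP]
  rw [h1, ← map_mul, ← map_mul, mul_comm]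

section AuxGeneric
variable {R : Type*} [Ring R]

lemma gen_comm_mul (P u v : R) :
    u * v * P - P * (u * v) = u * (v * P - P * v) + (u * P - P * u) * v := by
  noncomm_ring

lemma gen_comm_nsmul (c : ℕ) (P u : R) :
    (c • u) * P - P * (c • u) = c • (u * P - P * u) := by
  rw [smul_mul_assoc, mul_smul_comm, ← smul_sub]

lemma gen_comm_sub (P u v : R) :
    (u - v) * P - P * (u - v) = (u * P - P * u) - (v * P - P * v) := by
  noncomm_ring

lemma gen_comm_one (P : R) : 1 * P - P * 1 = 0 := by noncomm_ring

lemma gen_comm_sum {ι : Type*} (P : R) (s : Finset ι) (f : ι → R) :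
    (∑ i ∈ s, f i) * P - P * ∑ i ∈ s, f i = ∑ i ∈ s, (f i * P - P * f i) := by
  rw [Finset.sum_sub_distrib, Finset.sum_mul, Finset.mul_sum]

end AuxGeneric

lemma mw_smul_sum {ι : Type*} (c : ℕ) (s : Finset ι) (f : ι → MW k N) :
    c • ∑ i ∈ s, f i = ∑ i ∈ s, c • f i := Finset.smul_sum (M := ℕ) (N := MW k N) (r := c) (f := f) (s := s)

lemma mw_smul_smul (c d : ℕ) (x : MW k N) : c • d • x = (c * d) • x :=
  smul_smul (M := ℕ) (α := MW k N) c d x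

lemma mw_zero_smul (x : MW k N) : (0 : ℕ) • x = 0 := zero_smul (A := MW k N) ℕ x

lemma mw_one_smul (x : MW k N) : (1 : ℕ) • x = x := one_smul (α := MW k N) ℕ x

lemma mw_smul_mul (c : ℕ) (x y : MW k N) : (c • x) * y = c • (x * y) :=
  smul_mul_assoc (α := ℕ) (β := MW k N) c x y

lemma mw_mul_smul (c : ℕ) (x y : MW k N) : x * (c • y) = c • (x * y) :=
  mul_smul_comm (α := ℕ) (β := MW k N) c x y

lemma mw_sub_mul (x y z : MW k N) : (x - y) * z = x * z - y * z := sub_mul (α := MW k N) x y z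

lemma mw_sum_mul {ι : Type*} (s : Finset ι) (f : ι → MW k N) (y : MW k N) :
    (∑ i ∈ s, f i) * y = ∑ i ∈ s, f i * y := Finset.sum_mul (R := MW k N) s f y

lemma mw_mul_assoc (x y z : MW k N) : x * (y * z) = x * y * z := (mul_assoc (G := MW k N) x y z).symm

lemma mw_mul_one (x : MW k N) : x * 1 = x := mul_one (M := MW k N) x

lemma mw_one_mul (x : MW k N) : 1 * x = x := one_mul (M := MW k N) x

lemma mw_zero_mul (x : MW k N) : (0 : MW k N) * x = 0 := zero_mul (M₀ := MW k N) x

lemma mw_add_zero (x : MW k N) : x + 0 = x := add_zero (a := x)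

lemma qM_pow_succ (e : ℕ) : qM k N ^ (e + 1) = qM k N ^ e * qM k N := pow_succ (M := MW k N) (qM k N) e

lemma qM_pow_zero : qM k N ^ 0 = 1 := pow_zero (M := MW k N) (qM k N)

lemma dq_mul (u v : MW k N) : dq k N (u * v) = u * dq k N v + dq k N u * v :=
  gen_comm_mul (R := MW k N) (pM k N) u v

lemma dq_nsmul (c : ℕ) (u : MW k N) : dq k N (c • u) = c • dq k N u :=
  gen_comm_nsmul (R := MW k N) c (pM k N) u

lemma dq_sub (u v : MW k N) : dq k N (u - v) = dq k N u - dq k N v :=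
  gen_comm_sub (R := MW k N) (pM k N) u v

lemma dq_one : dq k N 1 = 0 := gen_comm_one (R := MW k N) (pM k N)

lemma dq_sum {ι : Type*} (s : Finset ι) (f : ι → MW k N) :
    dq k N (∑ i ∈ s, f i) = ∑ i ∈ s, dq k N (f i) :=
  gen_comm_sum (R := MW k N) (pM k N) s f

lemma dq_qM : dq k N (qM k N) = 1 := by
  show qM k N * pM k N - pM k N * qM k N = 1
  have h1 : qM k N * pM k N = Matrix.diagonal fun _ => qW k * pW k :=
    Matrix.diagonal_mul_diagonal _ _
  have h2 : pM k N * qM k N = Matrix.diagonal fun _ => pW k * qW k :=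
    Matrix.diagonal_mul_diagonal _ _
  rw [h1, h2]
  have h3 : (Matrix.diagonal fun _ : Fin N => qW k * pW k)
      - (Matrix.diagonal fun _ : Fin N => pW k * qW k)
      = Matrix.diagonal fun i : Fin N => (qW k * pW k - pW k * qW k) :=
    Matrix.diagonal_sub (α := WeylA k) (fun _ : Fin N => qW k * pW k) (fun _ : Fin N => pW k * qW k)
  rw [h3]
  have h4 : (fun _ : Fin N => (qW k * pW k - pW k * qW k)) = fun _ : Fin N => (1 : WeylA k) := by
    funext i; exact qp_rel k
  rw [h4]
  exact Matrix.diagonal_one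

lemma dq_qM_pow (e : ℕ) : dq k N (qM k N ^ (e + 1)) = (e + 1) • qM k N ^ e := by
  induction e with
  | zero =>
    rw [qM_pow_succ, qM_pow_zero, mw_one_mul, dq_qM]
    exact (mw_one_smul k N 1).symm
  | succ e ih =>
    rw [qM_pow_succ k N (e + 1), dq_mul, ih, dq_qM, mw_mul_one, mw_smul_mul,
      ← qM_pow_succ, succ_nsmul (M := MW k N) (qM k N ^ (e + 1)) (e + 1)]
    exact add_comm (G := MW k N) (qM k N ^ (e + 1)) ((e + 1) • qM k N ^ (e + 1))

lemma dq_map_polyP (B : Matrix (Fin N) (Fin N) (Polynomial k)) :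
    dq k N (B.map (polyP k)) = 0 := by
  show B.map (polyP k) * pM k N - pM k N * B.map (polyP k) = 0
  apply Matrix.ext; intro i j
  show (B.map (polyP k) * pM k N) i j - (pM k N * B.map (polyP k)) i j = 0
  rw [show (B.map (polyP k) * pM k N) i j = (B.map (polyP k)) i j * pW k from
      Matrix.mul_diagonal (fun _ => pW k) (B.map (polyP k)) i j,
    show (pM k N * B.map (polyP k)) i j = pW k * (B.map (polyP k)) i j from
      Matrix.diagonal_mul (fun _ => pW k) (B.map (polyP k)) i j]
  rw [Matrix.map_apply, polyP_mul_pW]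
  exact sub_self (pW k * polyP k (B i j))

lemma dq_eq_zero_imp (b : MW k N) (h : dq k N b = 0) :
    ∃ B : Matrix (Fin N) (Fin N) (Polynomial k), b = B.map (polyP k) := by
  have h' : b * pM k N = pM k N * b := by
    have h2 : b * pM k N - pM k N * b = 0 := h
    exact sub_eq_zero.mp h2
  have hent : ∀ i j, b i j * pW k = pW k * b i j := by
    intro i j
    have := congrFun (congrFun h' i) j
    rwa [show (b * pM k N) i j = b i j * pW k from Matrix.mul_diagonal (fun _ => pW k) b i j,
      show (pM k N * b) i j = pW k * b i j from Matrix.diagonal_mul (fun _ => pW k) b i j] at this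
  choose f hf using fun i j => exists_polyP_of_commute k (b i j) (hent i j)
  exact ⟨Matrix.of f, by apply Matrix.ext; intro i j; simpa [Matrix.map_apply] using hf i j⟩

lemma map_eq_mul_qM_imp (B : Matrix (Fin N) (Fin N) (Polynomial k)) (y : MW k N)
    (h : B.map (polyP k) = y * qM k N) : B = 0 := by
  apply Matrix.ext; intro i j
  have := congrFun (congrFun h i) j
  rw [show (y * qM k N) i j = y i j * qW k from Matrix.mul_diagonal (fun _ => qW k) y i j,
    Matrix.map_apply] at this
  simpa using polyP_eq_zero_of_mul_q k (B i j) (y i j) this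

lemma dq_term (B : Matrix (Fin N) (Fin N) (Polynomial k)) (c e : ℕ) :
    dq k N (c • (B.map (polyP k) * qM k N ^ (e + 1)))
      = (c * (e + 1)) • (B.map (polyP k) * qM k N ^ e) := by
  rw [dq_nsmul, dq_mul, dq_map_polyP, mw_zero_mul, mw_add_zero, dq_qM_pow,
    mw_mul_smul, mw_smul_smul]

lemma step_key (A : ℕ → Matrix (Fin N) (Fin N) (Polynomial k)) (n m : ℕ) (hmn : m ≤ n)
    (an an1 : MW k N)
    (hIH : an = ∑ s ∈ Finset.range (m + 1),
      (n.choose s) • ((A s).map (polyP k) * qM k N ^ (n - s)))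
    (hd : dq k N an1 = (n + 1) • an) :
    ∃ B : Matrix (Fin N) (Fin N) (Polynomial k),
      an1 = (∑ s ∈ Finset.range (m + 1),
        ((n + 1).choose s) • ((A s).map (polyP k) * qM k N ^ (n + 1 - s))) + B.map (polyP k) := by
  set c : MW k N := ∑ s ∈ Finset.range (m + 1),
      ((n + 1).choose s) • ((A s).map (polyP k) * qM k N ^ (n + 1 - s)) with hc
  have hdc : dq k N c = (n + 1) • an := by
    rw [hc, dq_sum, hIH, mw_smul_sum]
    apply Finset.sum_congr rfl
    intro s hs
    have hsn : s ≤ n := le_trans (Nat.lt_succ_iff.mp (Finset.mem_range.mp hs)) hmn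
    have he : n + 1 - s = (n - s) + 1 := by omega
    rw [he, dq_term, mw_smul_smul]
    congr 1
    have h1 := Nat.choose_mul_succ_eq n s
    rw [he] at h1
    rw [← h1]
    exact Nat.mul_comm _ _
  have hz : dq k N (an1 - c) = 0 := by
    rw [dq_sub, hd, hdc]
    exact sub_self ((n + 1) • an)
  obtain ⟨B, hB⟩ := dq_eq_zero_imp k N _ hz
  refine ⟨B, ?_⟩
  have h5 : an1 = B.map (polyP k) + c :=
    (sub_eq_iff_eq_add (a := an1) (b := c) (c := B.map (polyP k))).mp hB
  rw [h5]
  exact add_comm (B.map (polyP k)) c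



/-- Lemma 3.2.3: a differential sequence in `M_N(W)` (i.e. `∂_q a_n = n·a_{n-1}`
and `a_n ∈ M_N(W)·q` eventually) is of the form `a_n = Σ_s C(n,s) A_s q^{n-s}`
for finitely many matrices `A_s` with entries in `k[p]`. -/
theorem differential_sequence_eq (N : ℕ) (a : ℕ → MW k N)
    (h0 : dq k N (a 0) = 0)
    (hrec : ∀ n : ℕ, dq k N (a (n + 1)) = (n + 1) • a n)
    (hq : ∃ n₀ : ℕ, ∀ n ≥ n₀, ∃ y : MW k N, a n = y * qM k N) :
    ∃ (m : ℕ) (A : ℕ → Matrix (Fin N) (Fin N) (Polynomial k)),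
      ∀ n : ℕ, a n = ∑ s ∈ Finset.range (m + 1),
        (n.choose s) • ((A s).map (polyP k) * qM k N ^ (n - s)) := by
  obtain ⟨n₀, hq⟩ := hq
  -- Phase 1 : construct A valid up to any bound M
  have phase1 : ∀ M : ℕ, ∃ A : ℕ → Matrix (Fin N) (Fin N) (Polynomial k),
      ∀ n ≤ M, a n = ∑ s ∈ Finset.range (n + 1),
        (n.choose s) • ((A s).map (polyP k) * qM k N ^ (n - s)) := by
    intro M
    induction M with
    | zero =>
      obtain ⟨B, hB⟩ := dq_eq_zero_imp k N _ h0
      refine ⟨fun _ => B, ?_⟩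
      intro n hn
      have hn0 : n = 0 := Nat.le_zero.mp hn
      subst hn0
      rw [Finset.sum_range_one, hB, Nat.sub_self, qM_pow_zero, mw_mul_one]
      exact (mw_one_smul k N _).symm
    | succ M ihM =>
      obtain ⟨A, hA⟩ := ihM
      obtain ⟨B, hB⟩ := step_key k N A M M le_rfl (a M) (a (M + 1)) (hA M le_rfl) (hrec M)
      refine ⟨Function.update A (M + 1) B, ?_⟩
      intro n hn
      rcases Nat.lt_succ_iff_lt_or_eq.mp (Nat.lt_succ_of_le hn) with h | h
      · -- n ≤ M
        have hn' : n ≤ M := Nat.lt_succ_iff.mp h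
        rw [hA n hn']
        apply Finset.sum_congr rfl
        intro s hs
        have : s ≠ M + 1 := by
          have := Finset.mem_range.mp hs; omega
        rw [Function.update_of_ne this]
      · -- n = M + 1
        subst h
        rw [Finset.sum_range_succ, hB]
        congr 1
        · apply Finset.sum_congr rfl
          intro s hs
          have : s ≠ M + 1 := by
            have := Finset.mem_range.mp hs; omega
          rw [Function.update_of_ne this]
        · rw [Function.update_self, Nat.choose_self, Nat.sub_self, qM_pow_zero,
            mw_mul_one]
          exact (mw_one_smul k N _).symm
  obtain ⟨A, hA⟩ := phase1 n₀
  -- padded claim up to n₀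
  have pad : ∀ n ≤ n₀, a n = ∑ s ∈ Finset.range (n₀ + 1),
      (n.choose s) • ((A s).map (polyP k) * qM k N ^ (n - s)) := by
    intro n hn
    rw [hA n hn]
    apply Finset.sum_subset
    · exact Finset.range_subset_range.mpr (by omega)
    · intro s hs hns
      have h1 : n < s := by
        have := Finset.mem_range.not.mp hns; omega
      rw [Nat.choose_eq_zero_of_lt h1]
      exact mw_zero_smul k N _
  -- Phase 2 : extend beyond n₀
  have phase2 : ∀ n, n₀ ≤ n → a n = ∑ s ∈ Finset.range (n₀ + 1),
      (n.choose s) • ((A s).map (polyP k) * qM k N ^ (n - s)) := by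
    intro n hn
    induction n, hn using Nat.le_induction with
    | base => exact pad n₀ le_rfl
    | succ n hn ih =>
      obtain ⟨B, hB⟩ := step_key k N A n n₀ hn (a n) (a (n + 1)) ih (hrec n)
      obtain ⟨y, hy⟩ := hq (n + 1) (by omega)
      -- the sum part is a multiple of qM
      have hsum : (∑ s ∈ Finset.range (n₀ + 1),
          ((n + 1).choose s) • ((A s).map (polyP k) * qM k N ^ (n + 1 - s)))
          = (∑ s ∈ Finset.range (n₀ + 1),
          ((n + 1).choose s) • ((A s).map (polyP k) * qM k N ^ (n - s))) * qM k N := by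
        rw [mw_sum_mul]
        apply Finset.sum_congr rfl
        intro s hs
        have hsn : s ≤ n := le_trans (Nat.lt_succ_iff.mp (Finset.mem_range.mp hs)) hn
        have he : n + 1 - s = (n - s) + 1 := by omega
        rw [he, qM_pow_succ, mw_mul_assoc, mw_smul_mul]
      have hmap : B.map (polyP k)
          = (y - ∑ s ∈ Finset.range (n₀ + 1),
              ((n + 1).choose s) • ((A s).map (polyP k) * qM k N ^ (n - s))) * qM k N := by
        rw [mw_sub_mul, ← hsum, ← hy, hB]
        exact (add_sub_cancel_left
          (∑ s ∈ Finset.range (n₀ + 1),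
            ((n + 1).choose s) • ((A s).map (polyP k) * qM k N ^ (n + 1 - s)))
          (B.map (polyP k))).symm
      have hB0 : B = 0 := map_eq_mul_qM_imp k N B _ hmap
      rw [hB, hB0]
      have : (0 : Matrix (Fin N) (Fin N) (Polynomial k)).map (polyP k) = 0 := by
        apply Matrix.ext; intro i j
        simp [Matrix.map_apply]
      rw [this]
      exact mw_add_zero k N _
  refine ⟨n₀, A, fun n => ?_⟩
  rcases le_or_gt n n₀ with h | h
  · exact pad n h
  · exact phase2 n (le_of_lt h)

end
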